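/- If m is a positive integer such that φ(rad(m)) divides m, then m is a value of Euler's totient function; specifically m = φ(m·rad(m)/φ(rad(m))). -/

import Mathlib

/-- The radical of `m`: the product of the distinct prime factors of `m`. -/
def rad (m : ℕ) : ℕ := ∏ p ∈ m.primeFactors, p

theorem totient_rad_dvd_imp_totient_value (m : ℕ) (hm : 0 < m)
    (h : Nat.totient (rad m) ∣ m) :
    m = Nat.totient (m * rad m / Nat.totient (rad m)) := by
  have hm0 : m ≠ 0 := hm.ne'
  have hradF : (rad m).primeFactors = m.primeFactors :=
    Nat.primeFactors_prod (fun p hp => Nat.prime_of_mem_primeFactors hp)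
  have hrad0 : rad m ≠ 0 := by
    refine Finset.prod_ne_zero_iff.2 fun p hp => (Nat.prime_of_mem_primeFactors hp).ne_zero
  set t := Nat.totient (rad m) with ht
  have ht0 : t ≠ 0 := Nat.totient_pos.2 (Nat.pos_of_ne_zero hrad0) |>.ne'
  set k := m / t with hk
  have hkm : k * t = m := Nat.div_mul_cancel h
  have hk0 : k ≠ 0 := by
    intro h0; rw [h0, zero_mul] at hkm; exact hm0 hkm.symm
  have hn : m * rad m / t = k * rad m := by
    rw [mul_comm m (rad m), Nat.mul_div_assoc _ h, mul_comm]
  have hkdvd : k ∣ m := ⟨t, hkm.symm⟩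
  have hnF : (k * rad m).primeFactors = m.primeFactors := by
    rw [Nat.primeFactors_mul hk0 hrad0, hradF]
    exact Finset.union_eq_right.2 (Nat.primeFactors_mono hkdvd hm0)
  rw [hn]
  have key : (Nat.totient (k * rad m) : ℚ) = m := by
    rw [Nat.totient_eq_mul_prod_factors, hnF]
    have hrq : ((rad m : ℕ) : ℚ) * ∏ p ∈ m.primeFactors, (1 - (p : ℚ)⁻¹) = t := by
      rw [ht, Nat.totient_eq_mul_prod_factors, hradF]
    push_cast
    calc (k : ℚ) * (rad m) * ∏ p ∈ m.primeFactors, (1 - (p : ℚ)⁻¹)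
        = k * ((rad m) * ∏ p ∈ m.primeFactors, (1 - (p : ℚ)⁻¹)) := by ring
      _ = k * t := by rw [hrq]
      _ = m := by exact_mod_cast congrArg (Nat.cast : ℕ → ℚ) hkm
  exact_mod_cast key.symm
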